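/- Let f : T² → T² be a homeomorphism and let W ⊂ T² be an open f-invariant set whose complement is inessential, i.e., contained in a finite union of topological open disks each of which lifts homeomorphically to ℝ². Suppose there is R > 0 such that for every x ∈ W and every lift x̃, pr_v(f̃ⁿ(x̃) − x̃) ≤ R for all n ≥ 0, where f̃ is a lift of f and v a fixed unit vector. Then there exists R′ > 0 such that pr_v(f̃ⁿ(x̃) − x̃) ≤ R′ for every x̃ ∈ ℝ² and all n ≥ 0. -/

import Mathlib

open Filter Set

abbrev R2 := ℝ × ℝ

abbrev T2 := AddCircle (1 : ℝ) × AddCircle (1 : ℝ)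

noncomputable def pi2 (x : R2) : T2 :=
  ((x.1 : AddCircle (1 : ℝ)), (x.2 : AddCircle (1 : ℝ)))

def ivec (v : ℤ × ℤ) : R2 := ((v.1 : ℝ), (v.2 : ℝ))

def dot (a b : R2) : ℝ := a.1 * b.1 + a.2 * b.2

lemma pi2_continuous : Continuous pi2 :=
  ((AddCircle.continuous_mk' (1:ℝ)).comp continuous_fst).prodMk
    ((AddCircle.continuous_mk' (1:ℝ)).comp continuous_snd)

lemma coe_eq_coe_int (a b : ℝ) (h : (a : AddCircle (1:ℝ)) = b) : ∃ m : ℤ, a = b + m := by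
  rw [QuotientAddGroup.eq] at h
  obtain ⟨m, hm⟩ := h
  refine ⟨-m, ?_⟩
  simp only [zsmul_eq_mul, mul_one] at hm
  push_cast
  linarith

lemma pi2_eq_iff (a b : R2) (h : pi2 a = pi2 b) : ∃ w : ℤ × ℤ, a = b + ivec w := by
  have h1 := congrArg Prod.fst h
  have h2 := congrArg Prod.snd h
  simp only [pi2] at h1 h2
  obtain ⟨m1, hm1⟩ := coe_eq_coe_int _ _ h1
  obtain ⟨m2, hm2⟩ := coe_eq_coe_int _ _ h2
  exact ⟨(m1, m2), Prod.ext hm1 hm2⟩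

lemma coe_add_int (r : ℝ) (m : ℤ) : ((r + m : ℝ) : AddCircle (1:ℝ)) = r := by
  rw [QuotientAddGroup.eq]
  exact ⟨-m, by push_cast [zsmul_eq_mul]; ring⟩

lemma pi2_add_ivec (x : R2) (w : ℤ × ℤ) : pi2 (x + ivec w) = pi2 x := by
  unfold pi2 ivec
  refine Prod.ext ?_ ?_
  · exact coe_add_int x.1 w.1
  · exact coe_add_int x.2 w.2

lemma iterate_image_open (f : R2 → R2) (hf : IsOpenMap f) (n : ℕ) (s : Set R2)
    (hs : IsOpen s) : IsOpen (f^[n] '' s) := by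
  induction n with
  | zero => simpa
  | succ n ih =>
    rw [Function.iterate_succ', Set.image_comp]
    exact hf _ ih

/-- If the complement of an open invariant set `W ⊂ T²` is covered by finitely many open
topological disks with boundaries in `W`, each lifting homeomorphically to a bounded set
in `ℝ²`, and the forward displacements in the direction `v` of all points of `W` are
uniformly bounded by `R`, then they are uniformly bounded for all points of `ℝ²`. -/
theorem stmt12 (f : T2 → T2) (hf : Continuous f)
    (ftilde : R2 ≃ₜ R2)
    (hcomm : ∀ (x : R2) (w : ℤ × ℤ), ftilde (x + ivec w) = ftilde x + ivec w)
    (hlift : ∀ x : R2, pi2 (ftilde x) = f (pi2 x))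
    (v : R2) (hv : dot v v = 1)
    (W : Set T2) (hWopen : IsOpen W) (hWinv : f '' W = W)
    (k : ℕ) (D : Fin k → Set T2)
    (hcover : Wᶜ ⊆ ⋃ i, D i)
    (hDopen : ∀ i, IsOpen (D i))
    (hfrontier : ∀ i, frontier (D i) ⊆ W)
    (hDlift : ∀ i, ∃ Dt : Set R2, IsOpen Dt ∧ Bornology.IsBounded Dt ∧
      pi2 '' Dt = D i ∧ Set.InjOn pi2 Dt)
    (R : ℝ) (hR : 0 < R)
    (hbdW : ∀ x : R2, pi2 x ∈ W → ∀ n : ℕ, dot ((⇑ftilde)^[n] x - x) v ≤ R) :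
    ∃ R' : ℝ, 0 < R' ∧ ∀ (x : R2) (n : ℕ), dot ((⇑ftilde)^[n] x - x) v ≤ R' := by
  classical
  choose Dt hDtopen hDtbdd hDtim hDtinj using hDlift
  choose M hM0 hMsub using fun i => (hDtbdd i).subset_closedBall_lt 0 0
  -- |v.1| ≤ 1 and |v.2| ≤ 1
  have hv1 : |v.1| ≤ 1 := by
    rw [abs_le]; constructor <;> nlinarith [sq_nonneg v.2, sq_nonneg (v.1+1), sq_nonneg (v.1-1),
      (show v.1*v.1 + v.2*v.2 = 1 from hv)]
  have hv2 : |v.2| ≤ 1 := by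
    rw [abs_le]; constructor <;> nlinarith [sq_nonneg v.1, sq_nonneg (v.2+1), sq_nonneg (v.2-1),
      (show v.1*v.1 + v.2*v.2 = 1 from hv)]
  -- commutation of iterates with integer translations
  have hitercomm : ∀ (n : ℕ) (x : R2) (w : ℤ × ℤ),
      (⇑ftilde)^[n] (x + ivec w) = (⇑ftilde)^[n] x + ivec w := by
    intro n
    induction n with
    | zero => intro x w; simp
    | succ n ih =>
      intro x w
      rw [Function.iterate_succ_apply, Function.iterate_succ_apply, hcomm, ih]
  have hsum0 : (0:ℝ) ≤ ∑ j, 4 * M j :=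
    Finset.sum_nonneg fun j _ => by linarith [hM0 j]
  refine ⟨R + ∑ i, 4 * M i, by linarith, ?_⟩
  have hsum_ge : ∀ i : Fin k, 4 * M i ≤ ∑ j, 4 * M j := by
    intro i
    exact Finset.single_le_sum (f := fun j => 4 * M j)
      (fun j _ => by linarith [hM0 j]) (Finset.mem_univ i)
  intro x n
  by_cases hxW : pi2 x ∈ W
  · linarith [hbdW x hxW n]
  · -- x projects into some disk D i
    obtain ⟨_, ⟨i, rfl⟩, hxD⟩ := hcover hxW
    -- pick a preimage y in the chosen lift
    have hxD' : pi2 x ∈ pi2 '' Dt i := by rw [hDtim]; exact hxD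
    obtain ⟨y, hyDt, hy⟩ := hxD'
    obtain ⟨w, rfl⟩ := pi2_eq_iff x y hy.symm
    -- reduce to bounding the displacement of y
    rw [hitercomm]
    have heq : (⇑ftilde)^[n] y + ivec w - (y + ivec w) = (⇑ftilde)^[n] y - y := by
      abel
    rw [heq]
    -- setup: compact set K = f^[n] '' closure (Dt i)
    set g := (⇑ftilde)^[n] with hg
    have hgc : Continuous g := ftilde.continuous.iterate n
    have hginj : Function.Injective g := ftilde.injective.iterate n
    have hclcomp : IsCompact (closure (Dt i)) := (hDtbdd i).isCompact_closure
    have hKcomp : IsCompact (g '' closure (Dt i)) := hclcomp.image hgc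
    have hKne : (g '' closure (Dt i)).Nonempty := ⟨g y, y, subset_closure hyDt, rfl⟩
    obtain ⟨p0, hp0K, hp0max⟩ := hKcomp.exists_isMaxOn (f := fun p => dot p v) hKne
      (continuous_fst.mul continuous_const |>.add
        (continuous_snd.mul continuous_const)).continuousOn
    obtain ⟨q, hqcl, hqg⟩ := hp0K
    -- q is not in Dt i: otherwise interior max of linear functional
    have hqnot : q ∉ Dt i := by
      intro hq
      have hopen : IsOpen (g '' Dt i) :=
        iterate_image_open _ ftilde.isOpenMap n _ (hDtopen i)
      have hp0mem : p0 ∈ g '' Dt i := ⟨q, hq, hqg⟩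
      obtain ⟨r, hrpos, hball⟩ := Metric.isOpen_iff.1 hopen p0 hp0mem
      set p' : R2 := p0 + ((r/2) * v.1, (r/2) * v.2) with hp'
      have hp'mem : p' ∈ Metric.ball p0 r := by
        rw [Metric.mem_ball, Prod.dist_eq]
        have hd1 : p'.1 - p0.1 = r/2 * v.1 := by simp [hp']
        have hd2 : p'.2 - p0.2 = r/2 * v.2 := by simp [hp']
        have d1 : dist p'.1 p0.1 = |r/2 * v.1| := by rw [Real.dist_eq, hd1]
        have d2 : dist p'.2 p0.2 = |r/2 * v.2| := by rw [Real.dist_eq, hd2]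
        have b1 : |r/2 * v.1| ≤ r/2 := by
          rw [abs_mul, abs_of_pos (by linarith : (0:ℝ) < r/2)]
          calc r/2 * |v.1| ≤ r/2 * 1 :=
                mul_le_mul_of_nonneg_left hv1 (by linarith)
            _ = r/2 := mul_one _
        have b2 : |r/2 * v.2| ≤ r/2 := by
          rw [abs_mul, abs_of_pos (by linarith : (0:ℝ) < r/2)]
          calc r/2 * |v.2| ≤ r/2 * 1 :=
                mul_le_mul_of_nonneg_left hv2 (by linarith)
            _ = r/2 := mul_one _
        rw [d1, d2]
        exact max_lt (by linarith) (by linarith)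
      have hp'K : p' ∈ g '' closure (Dt i) :=
        (Set.image_mono (f := g) subset_closure) (hball hp'mem)
      have := hp0max hp'K
      have hdot : dot p' v = dot p0 v + r/2 := by
        simp only [hp', dot, Prod.fst_add, Prod.snd_add]
        nlinarith [(show v.1*v.1 + v.2*v.2 = 1 from hv)]
      simp only [IsMaxOn, IsMaxFilter] at this
      have hle : dot p' v ≤ dot p0 v := this
      rw [hdot] at hle
      linarith
    -- q projects to the frontier of D i, hence into W
    have hqfr : pi2 q ∈ W := by
      apply hfrontier i
      constructor
      · have : pi2 q ∈ closure (pi2 '' Dt i) :=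
          (Set.mapsTo_image pi2 (Dt i)).closure pi2_continuous hqcl
        rwa [hDtim] at this
      · rw [(hDopen i).interior_eq]
        intro hqD
        rw [← hDtim] at hqD
        obtain ⟨y', hy'Dt, hy'⟩ := hqD
        obtain ⟨w', hw'⟩ := pi2_eq_iff q y' hy'.symm
        -- the translate (Dt i) + ivec w' is an open neighborhood of q
        have hopen' : IsOpen ((fun p => p + ivec w') '' Dt i) :=
          (Homeomorph.addRight (ivec w')).isOpenMap _ (hDtopen i)
        have hqmem : q ∈ (fun p => p + ivec w') '' Dt i := ⟨y', hy'Dt, hw'.symm⟩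
        have hne : (((fun p => p + ivec w') '' Dt i) ∩ Dt i).Nonempty :=
          mem_closure_iff.1 hqcl _ hopen' hqmem
        obtain ⟨p, ⟨p'', hp''Dt, hp''⟩, hpDt⟩ := hne
        have : pi2 p = pi2 p'' := by rw [← hp'']; exact pi2_add_ivec p'' w'
        have hpp : p = p'' := hDtinj i hpDt hp''Dt this
        have hiv0 : ivec w' = 0 := by
          have h5 : p'' + ivec w' = p := hp''
          rw [hpp] at h5
          exact add_eq_left.mp h5
        rw [hiv0, add_zero] at hw'
        exact hqnot (hw' ▸ hy'Dt)
    -- now combine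
    have hbq : dot (g q - q) v ≤ R := hbdW q hqfr n
    have hmaxy : dot (g y) v ≤ dot (g q) v := by
      have := hp0max ⟨y, subset_closure hyDt, rfl⟩
      simp only [IsMaxOn, IsMaxFilter] at this
      rw [hqg]; exact this
    -- q and y both lie in closedBall 0 (M i)
    have hMq : q ∈ Metric.closedBall (0:R2) (M i) :=
      closure_minimal (hMsub i) Metric.isClosed_closedBall hqcl
    have hMy : y ∈ Metric.closedBall (0:R2) (M i) :=
      (hMsub i) hyDt
    have habs : ∀ p : R2, p ∈ Metric.closedBall (0:R2) (M i) → |p.1| ≤ M i ∧ |p.2| ≤ M i := by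
      intro p hp
      simp only [Metric.mem_closedBall, Prod.dist_eq, Prod.fst_zero, Prod.snd_zero,
        Real.dist_eq, sub_zero, max_le_iff] at hp
      exact hp
    obtain ⟨hq1, hq2⟩ := habs q hMq
    obtain ⟨hy1, hy2⟩ := habs y hMy
    -- dot (q - y) v ≤ 4 * M i
    have hqy : dot (q - y) v ≤ 4 * M i := by
      have e1 : (q.1 - y.1) * v.1 ≤ |q.1 - y.1| * |v.1| := by
        rw [← abs_mul]; exact le_abs_self _
      have e2 : (q.2 - y.2) * v.2 ≤ |q.2 - y.2| * |v.2| := by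
        rw [← abs_mul]; exact le_abs_self _
      have a1 : |q.1 - y.1| ≤ 2 * M i := by
        calc |q.1 - y.1| ≤ |q.1| + |y.1| := abs_sub _ _
          _ ≤ 2 * M i := by linarith
      have a2 : |q.2 - y.2| ≤ 2 * M i := by
        calc |q.2 - y.2| ≤ |q.2| + |y.2| := abs_sub _ _
          _ ≤ 2 * M i := by linarith
      have m1 : |q.1 - y.1| * |v.1| ≤ 2 * M i := by
        calc |q.1 - y.1| * |v.1| ≤ |q.1 - y.1| * 1 :=
              mul_le_mul_of_nonneg_left hv1 (abs_nonneg _)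
          _ = |q.1 - y.1| := mul_one _
          _ ≤ 2 * M i := a1
      have m2 : |q.2 - y.2| * |v.2| ≤ 2 * M i := by
        calc |q.2 - y.2| * |v.2| ≤ |q.2 - y.2| * 1 :=
              mul_le_mul_of_nonneg_left hv2 (abs_nonneg _)
          _ = |q.2 - y.2| := mul_one _
          _ ≤ 2 * M i := a2
      simp only [dot, Prod.fst_sub, Prod.snd_sub]
      linarith
    have key : dot (g y - y) v ≤ R + 4 * M i := by
      have e1 : dot (g y - y) v = dot (g y) v - dot y v := by
        simp only [dot, Prod.fst_sub, Prod.snd_sub]; ring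
      have e2 : dot (g q - q) v = dot (g q) v - dot q v := by
        simp only [dot, Prod.fst_sub, Prod.snd_sub]; ring
      have e3 : dot (q - y) v = dot q v - dot y v := by
        simp only [dot, Prod.fst_sub, Prod.snd_sub]; ring
      rw [e1]
      rw [e2] at hbq
      rw [e3] at hqy
      linarith
    linarith [hsum_ge i]
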